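/- Let k ≥ 1, m ≥ k, and define G : F_{2^k} × F_{2^k} → F_{2^k} × F_2^{m-k} by G(x,y) = (x^{2^i} π(y) + g(y), h(y)), where π is a permutation of F_{2^k}, g : F_{2^k} → F_{2^k} and h : F_{2^k} → F_2^{m-k} are arbitrary, and 0 ≤ i < k. Then for any nonzero (u,v) ∈ F_{2^k} × F_2^{m-k}, the component function (x,y) ↦ Tr^k_1(u(x^{2^i}π(y)+g(y))) + ⟨v, h(y)⟩ is bent if and only if u ≠ 0. In particular G has exactly 2^m - 2^{m-k} bent components, the maximal possible number. -/

import Mathlib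

open Finset

def chr (b : ZMod 2) : ℤ := if b = 0 then 1 else -1

def ip {r : ℕ} (a b : Fin r → ZMod 2) : ZMod 2 := ∑ i, a i * b i

variable {K : Type*} [Field K] [Fintype K] [Algebra (ZMod 2) K]

/-- The absolute trace `Tr^k_1 : F_{2^k} → F_2`. -/
noncomputable def tr (x : K) : ZMod 2 := Algebra.trace (ZMod 2) K x

/-- Walsh transform of a Boolean function on `F_{2^k} × F_{2^k}`. -/
noncomputable def walsh2 (f : K × K → ZMod 2) (l : K × K) : ℤ :=
  ∑ x : K × K, chr (f x + tr (l.1 * x.1) + tr (l.2 * x.2))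

/-- `f` is bent on `F_{2^k} × F_{2^k}`: all Walsh values are `±2^k`. -/
def IsBent2 (k : ℕ) (f : K × K → ZMod 2) : Prop :=
  ∀ l : K × K, walsh2 f l = 2 ^ k ∨ walsh2 f l = -(2 ^ k)

lemma chrK : CharP K 2 := charP_of_injective_ringHom (algebraMap (ZMod 2) K).injective 2

lemma chr_add (a b : ZMod 2) : chr (a + b) = chr a * chr b := by revert a b; decide

lemma chr_vals (a : ZMod 2) : chr a = 1 ∨ chr a = -1 := by revert a; decide

lemma tr_add (x y : K) : tr (x + y) = tr x + tr y := map_add (Algebra.trace (ZMod 2) K) x y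

lemma tr_zero : tr (0 : K) = 0 := map_zero (Algebra.trace (ZMod 2) K)

/-- Frobenius as a `ZMod 2`-linear equivalence. -/
noncomputable def frobLE (K : Type*) [Field K] [Fintype K] [Algebra (ZMod 2) K] :
    K ≃ₗ[ZMod 2] K := by
  haveI : CharP K 2 := chrK
  haveI : Fact (Nat.Prime 2) := ⟨Nat.prime_two⟩
  exact LinearEquiv.ofBijective
    { toFun := fun x => x ^ 2
      map_add' := fun x y => add_pow_char x y 2
      map_smul' := fun c x => by
        simp only [Algebra.smul_def, mul_pow, ← map_pow, RingHom.id_apply, ZMod.pow_card c] }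
    ⟨fun x y hxy => frobenius_inj K 2 (by simpa [frobenius_def] using hxy),
     Finite.surjective_of_injective fun x y hxy =>
       frobenius_inj K 2 (by simpa [frobenius_def] using hxy)⟩

lemma frobLE_apply (x : K) : frobLE K x = x ^ 2 := rfl

lemma tr_sq (x : K) : tr (x ^ 2) = tr x := by
  have key : (frobLE K).conj (LinearMap.mulLeft (ZMod 2) x) = LinearMap.mulLeft (ZMod 2) (x ^ 2) := by
    apply LinearMap.ext
    intro w
    rw [LinearEquiv.conj_apply_apply]
    simp only [LinearMap.mulLeft_apply, frobLE_apply, mul_pow]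
    congr 1
    have : (frobLE K) ((frobLE K).symm w) = w := (frobLE K).apply_symm_apply w
    rw [frobLE_apply] at this
    exact this
  show Algebra.trace (ZMod 2) K (x ^ 2) = Algebra.trace (ZMod 2) K x
  rw [Algebra.trace_apply, Algebra.trace_apply]
  have h1 : Algebra.lmul (ZMod 2) K x = LinearMap.mulLeft (ZMod 2) x := rfl
  have h2 : Algebra.lmul (ZMod 2) K (x ^ 2) = LinearMap.mulLeft (ZMod 2) (x ^ 2) := rfl
  rw [h1, h2, ← key]
  exact LinearMap.trace_conj' _ _

lemma tr_pow_pow (n : ℕ) (x : K) : tr (x ^ 2 ^ n) = tr x := by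
  induction n with
  | zero => simp
  | succ n ih => rw [pow_succ, pow_mul, tr_sq, ih]

lemma exists_tr_ne (c : K) (hc : c ≠ 0) : ∃ x, tr (c * x) ≠ 0 := by
  haveI : CharP K 2 := chrK
  haveI : Fact (Nat.Prime 2) := ⟨Nat.prime_two⟩
  have htr := (traceForm_nondegenerate (ZMod 2) K).1 c
  simp_rw [Algebra.traceForm_apply] at htr
  by_contra! hf
  exact hc (htr hf)

lemma sum_chr_tr_zero : ∑ x : K, chr (tr ((0:K) * x)) = (Fintype.card K : ℤ) := by
  simp [tr_zero, chr]

lemma sum_chr_tr_ne (c : K) (hc : c ≠ 0) : ∑ x : K, chr (tr (c * x)) = 0 := by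
  obtain ⟨x0, hx0⟩ := exists_tr_ne c hc
  have hx0' : tr (c * x0) = 1 := by
    revert hx0; generalize tr (c * x0) = b; revert b; decide
  have hrefl : ∑ x : K, chr (tr (c * x)) = ∑ x : K, chr (tr (c * (x + x0))) :=
    (Fintype.sum_equiv (Equiv.addRight x0) _ _ (fun x => rfl)).symm
  have hneg : ∀ x : K, chr (tr (c * (x + x0))) = - chr (tr (c * x)) := by
    intro x
    rw [mul_add, tr_add, chr_add, hx0']
    have : chr 1 = -1 := rfl
    rw [this]; ring
  rw [Finset.sum_congr rfl (fun x _ => hneg x)] at hrefl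
  rw [Finset.sum_neg_distrib] at hrefl
  linarith

lemma pow_card_self (k : ℕ) (hcard : Fintype.card K = 2 ^ k) (x : K) : x ^ 2 ^ k = x := by
  rw [← hcard]; exact FiniteField.pow_card x

lemma innerSumEq (k i : ℕ) (hk : 0 < k) (hi : i < k) (hcard : Fintype.card K = 2 ^ k)
    (w a : K) (hwa : w ^ 2 ^ (k - i) = a) :
    ∑ x : K, chr (tr (w * x ^ 2 ^ i) + tr (a * x)) = (2 ^ k : ℤ) := by
  have key : ∀ x : K, tr (w * x ^ 2 ^ i) + tr (a * x) = tr ((w ^ 2 ^ (k - i) + a) * x) := by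
    intro x
    have h1 : tr (w * x ^ 2 ^ i) = tr (w ^ 2 ^ (k - i) * x) := by
      rw [← tr_pow_pow (k - i) (w * x ^ 2 ^ i), mul_pow, ← pow_mul, ← pow_add]
      have : i + (k - i) = k := by omega
      rw [this, pow_card_self k hcard]
    rw [h1, ← tr_add, ← add_mul]
  simp_rw [key]
  have hzero : w ^ 2 ^ (k - i) + a = 0 := by
    haveI : CharP K 2 := chrK
    rw [hwa, CharTwo.add_self_eq_zero]
  rw [hzero]
  have := sum_chr_tr_zero (K := K)
  rw [this, hcard]; push_cast; ring

lemma innerSumNe (k i : ℕ) (hk : 0 < k) (hi : i < k) (hcard : Fintype.card K = 2 ^ k)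
    (w a : K) (hwa : w ^ 2 ^ (k - i) ≠ a) :
    ∑ x : K, chr (tr (w * x ^ 2 ^ i) + tr (a * x)) = 0 := by
  have key : ∀ x : K, tr (w * x ^ 2 ^ i) + tr (a * x) = tr ((w ^ 2 ^ (k - i) + a) * x) := by
    intro x
    have h1 : tr (w * x ^ 2 ^ i) = tr (w ^ 2 ^ (k - i) * x) := by
      rw [← tr_pow_pow (k - i) (w * x ^ 2 ^ i), mul_pow, ← pow_mul, ← pow_add]
      have : i + (k - i) = k := by omega
      rw [this, pow_card_self k hcard]
    rw [h1, ← tr_add, ← add_mul]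
  simp_rw [key]
  apply sum_chr_tr_ne
  haveI : CharP K 2 := chrK
  intro h0
  rw [add_eq_zero_iff_eq_neg, CharTwo.neg_eq] at h0
  exact hwa h0

lemma bent_of_ne (k i : ℕ) (hk : 0 < k) (hi : i < k) (hcard : Fintype.card K = 2 ^ k)
    (π : K → K) (hπ : Function.Bijective π) (g : K → K) {r : ℕ} (h : K → Fin r → ZMod 2)
    (u : K) (hu : u ≠ 0) (v : Fin r → ZMod 2) :
    IsBent2 k (fun p : K × K => tr (u * (p.1 ^ 2 ^ i * π p.2 + g p.2)) + ip v (h p.2)) := by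
  classical
  rintro ⟨a, b⟩
  obtain ⟨y0, hπy0⟩ : ∃ y0, π y0 = u⁻¹ * a ^ 2 ^ i := hπ.surjective _
  have hcond : ∀ y : K, ((u * π y) ^ 2 ^ (k - i) = a) ↔ y = y0 := by
    intro y
    constructor
    · intro hy
      have h2 : u * π y = a ^ 2 ^ i := by
        have h3 := congrArg (· ^ 2 ^ i) hy
        simp only [← pow_mul, ← pow_add] at h3
        rwa [(by omega : k - i + i = k), pow_card_self k hcard] at h3
      apply hπ.injective
      rw [hπy0, ← h2, ← mul_assoc, inv_mul_cancel₀ hu, one_mul]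
    · rintro rfl
      rw [hπy0, ← mul_assoc, mul_inv_cancel₀ hu, one_mul, ← pow_mul, ← pow_add,
        (by omega : i + (k - i) = k), pow_card_self k hcard]
  have hterm : ∀ p : K × K,
      chr ((tr (u * (p.1 ^ 2 ^ i * π p.2 + g p.2)) + ip v (h p.2)) + tr (a * p.1) + tr (b * p.2)) =
      chr (tr ((u * π p.2) * p.1 ^ 2 ^ i) + tr (a * p.1)) *
        chr (tr (u * g p.2) + ip v (h p.2) + tr (b * p.2)) := by
    intro p
    rw [← chr_add]
    congr 1
    have he : u * (p.1 ^ 2 ^ i * π p.2 + g p.2) = (u * π p.2) * p.1 ^ 2 ^ i + u * g p.2 := by ring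
    rw [he, tr_add]
    ring
  have hw : walsh2 (fun p : K × K => tr (u * (p.1 ^ 2 ^ i * π p.2 + g p.2)) + ip v (h p.2)) (a, b)
      = chr (tr (u * g y0) + ip v (h y0) + tr (b * y0)) * 2 ^ k := by
    unfold walsh2
    rw [Finset.sum_congr rfl fun p _ => hterm p]
    rw [Fintype.sum_prod_type, Finset.sum_comm]
    have hinner : ∀ y : K,
        (∑ x : K, chr (tr ((u * π y) * x ^ 2 ^ i) + tr (a * x)) *
          chr (tr (u * g y) + ip v (h y) + tr (b * y)))
        = (if y = y0 then chr (tr (u * g y0) + ip v (h y0) + tr (b * y0)) * 2 ^ k else 0) := by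
      intro y
      rw [← Finset.sum_mul]
      by_cases hy : y = y0
      · rw [hy, innerSumEq k i hk hi hcard _ _ ((hcond y0).mpr rfl), if_pos rfl]
        ring
      · rw [innerSumNe k i hk hi hcard _ _ (fun hc => hy ((hcond y).mp hc)), if_neg hy]
        ring
    rw [Finset.sum_congr rfl fun y _ => hinner y]
    simp
  rw [hw]
  rcases chr_vals (tr (u * g y0) + ip v (h y0) + tr (b * y0)) with hc | hc <;> rw [hc]
  · left; ring
  · right; ring

lemma not_bent_of_zero (k i : ℕ) (hk : 0 < k) (hi : i < k) (hcard : Fintype.card K = 2 ^ k)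
    (π : K → K) (g : K → K) {r : ℕ} (h : K → Fin r → ZMod 2) (v : Fin r → ZMod 2) :
    ¬ IsBent2 k (fun p : K × K => tr ((0:K) * (p.1 ^ 2 ^ i * π p.2 + g p.2)) + ip v (h p.2)) := by
  intro hb
  obtain ⟨a, ha⟩ := exists_ne (0 : K)
  have hw : walsh2 (fun p : K × K =>
      tr ((0:K) * (p.1 ^ 2 ^ i * π p.2 + g p.2)) + ip v (h p.2)) (a, 0) = 0 := by
    unfold walsh2
    have hterm : ∀ p : K × K,
        chr ((tr ((0:K) * (p.1 ^ 2 ^ i * π p.2 + g p.2)) + ip v (h p.2)) + tr (a * p.1) +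
          tr ((0:K) * p.2)) = chr (tr (a * p.1)) * chr (ip v (h p.2)) := by
      intro p
      rw [← chr_add]
      congr 1
      rw [zero_mul, zero_mul, tr_zero]
      ring
    rw [Finset.sum_congr rfl fun p _ => hterm p, Fintype.sum_prod_type]
    have : ∀ x : K, (∑ y : K, chr (tr (a * x)) * chr (ip v (h y)))
        = chr (tr (a * x)) * (∑ y : K, chr (ip v (h y))) := fun x => by rw [Finset.mul_sum]
    rw [Finset.sum_congr rfl fun x _ => this x, ← Finset.sum_mul, sum_chr_tr_ne a ha, zero_mul]
  have := hb (a, 0)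
  rw [hw] at this
  have hpos : (0:ℤ) < 2 ^ k := by positivity
  rcases this with h0 | h0 <;> linarith

theorem stmt7 (k m i : ℕ) (hk : 0 < k) (hm : k ≤ m) (hi : i < k)
    (hcard : Fintype.card K = 2 ^ k)
    (π : K → K) (hπ : Function.Bijective π)
    (g : K → K) (h : K → Fin (m - k) → ZMod 2) :
    (∀ (u : K) (v : Fin (m - k) → ZMod 2), (u, v) ≠ 0 →
      (IsBent2 k (fun p : K × K =>
          tr (u * (p.1 ^ (2 ^ i) * π p.2 + g p.2)) + ip v (h p.2)) ↔ u ≠ 0)) ∧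
    Nat.card {uv : K × (Fin (m - k) → ZMod 2) | uv ≠ 0 ∧
        IsBent2 k (fun p : K × K =>
          tr (uv.1 * (p.1 ^ (2 ^ i) * π p.2 + g p.2)) + ip uv.2 (h p.2))} =
      2 ^ m - 2 ^ (m - k) := by
  classical
  have main : ∀ (u : K) (v : Fin (m - k) → ZMod 2), (u, v) ≠ 0 →
      (IsBent2 k (fun p : K × K =>
          tr (u * (p.1 ^ (2 ^ i) * π p.2 + g p.2)) + ip v (h p.2)) ↔ u ≠ 0) := by
    intro u v huv
    constructor
    · intro hb hu0
      subst hu0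
      exact not_bent_of_zero k i hk hi hcard π g h v hb
    · intro hu
      exact bent_of_ne k i hk hi hcard π hπ g h u hu v
  refine ⟨main, ?_⟩
  have hset : {uv : K × (Fin (m - k) → ZMod 2) | uv ≠ 0 ∧
        IsBent2 k (fun p : K × K =>
          tr (uv.1 * (p.1 ^ (2 ^ i) * π p.2 + g p.2)) + ip uv.2 (h p.2))} =
      ({0}ᶜ ×ˢ Set.univ : Set (K × (Fin (m - k) → ZMod 2))) := by
    ext ⟨u, v⟩
    simp only [Set.mem_setOf_eq, Set.mem_prod, Set.mem_compl_iff, Set.mem_singleton_iff,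
      Set.mem_univ, and_true]
    constructor
    · rintro ⟨hne, hb⟩
      exact (main u v hne).mp hb
    · intro hu
      have hne : (u, v) ≠ 0 := fun h0 => hu (congrArg Prod.fst h0)
      exact ⟨hne, (main u v hne).mpr hu⟩
  rw [hset, Nat.card_congr (Equiv.Set.prod _ _), Nat.card_prod]
  have h1 : Nat.card ↑({0}ᶜ : Set K) = 2 ^ k - 1 := by
    rw [Nat.card_eq_fintype_card, Fintype.card_compl_set, Set.card_singleton, hcard]
  have h2 : Nat.card ↑(Set.univ : Set (Fin (m - k) → ZMod 2)) = 2 ^ (m - k) := by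
    rw [Nat.card_congr (Equiv.Set.univ _), Nat.card_eq_fintype_card, Fintype.card_fun, ZMod.card, Fintype.card_fin]
  rw [h1, h2]
  have hmul : 2 ^ k * 2 ^ (m - k) = 2 ^ m := by rw [← pow_add]; congr 1; omega
  calc (2 ^ k - 1) * 2 ^ (m - k) = 2 ^ k * 2 ^ (m - k) - 1 * 2 ^ (m - k) := by
        rw [Nat.sub_mul]
    _ = 2 ^ m - 2 ^ (m - k) := by rw [hmul, one_mul]
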